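/- For p, q ∈ ℝ³ set p₀ := √(1 + |p|²), q₀ := √(1 + |q|²) and τ(p,q) := p₀ q₀ − p·q. Let r ∈ (3/2, ∞]. There exists a constant C = C(r) > 0 such that for every g ∈ L^r(ℝ³) and every p ∈ ℝ³, ∫_{ℝ³} (τ(p,q)/(p₀ q₀)) (τ(p,q)² − 1)^{−1/2} e^{−q₀/2} |g(q)| dq ≤ C ‖g‖_{L^r(ℝ³)} (the integrand, defined for q ≠ p, is integrable, so the integral is finite for every p). -/

import Mathlib

open MeasureTheory
open scoped ENNReal

/-- Relativistic energy `p₀ = √(1 + |p|²)`. -/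
noncomputable def pZero (p : EuclideanSpace ℝ (Fin 3)) : ℝ := Real.sqrt (1 + ‖p‖ ^ 2)

/-- `τ(p,q) = p₀ q₀ - p·q`, the Lorentz inner product of the energy-momentum 4-vectors. -/
noncomputable def tauLor (p q : EuclideanSpace ℝ (Fin 3)) : ℝ :=
  pZero p * pZero q - (inner ℝ p q : ℝ)

section Auxiliary

open Real Set Metric

local notation "E3" => EuclideanSpace ℝ (Fin 3)

lemma pZero_sq (p : E3) : pZero p ^ 2 = 1 + ‖p‖ ^ 2 :=
  Real.sq_sqrt (by positivity)

lemma one_le_pZero (p : E3) : 1 ≤ pZero p := by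
  rw [show (1:ℝ) = Real.sqrt 1 by simp [Real.sqrt_one]]
  exact Real.sqrt_le_sqrt (by nlinarith [sq_nonneg ‖p‖])

lemma pZero_pos (p : E3) : 0 < pZero p := lt_of_lt_of_le one_pos (one_le_pZero p)

lemma norm_le_pZero (p : E3) : ‖p‖ ≤ pZero p := by
  rw [show ‖p‖ = Real.sqrt (‖p‖^2) by rw [Real.sqrt_sq (norm_nonneg p)]]
  exact Real.sqrt_le_sqrt (by linarith)

lemma pZero_le (p : E3) : pZero p ≤ 1 + ‖p‖ := by
  rw [show (1:ℝ) + ‖p‖ = Real.sqrt ((1+‖p‖)^2) by rw [Real.sqrt_sq (by positivity)]]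
  exact Real.sqrt_le_sqrt (by nlinarith [norm_nonneg p])

lemma mul_pZero_ge (p q : E3) : 1 + ‖p‖ * ‖q‖ ≤ pZero p * pZero q := by
  rw [pZero, pZero, ← Real.sqrt_mul (by positivity)]
  rw [show (1:ℝ) + ‖p‖*‖q‖ = Real.sqrt ((1+‖p‖*‖q‖)^2) by
    rw [Real.sqrt_sq (by positivity)]]
  exact Real.sqrt_le_sqrt (by nlinarith [sq_nonneg (‖p‖ - ‖q‖), norm_nonneg p, norm_nonneg q])

lemma one_le_tauLor (p q : E3) : 1 ≤ tauLor p q := by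
  have h1 := mul_pZero_ge p q
  have h2 : (inner ℝ p q : ℝ) ≤ ‖p‖ * ‖q‖ := real_inner_le_norm p q
  rw [tauLor]; linarith

lemma tauLor_le (p q : E3) : tauLor p q ≤ 2 * (pZero p * pZero q) := by
  have h2 : -(‖p‖ * ‖q‖) ≤ (inner ℝ p q : ℝ) := neg_le_of_abs_le (abs_real_inner_le_norm p q)
  have h3 : ‖p‖ * ‖q‖ ≤ pZero p * pZero q :=
    mul_le_mul (norm_le_pZero p) (norm_le_pZero q) (norm_nonneg q) (pZero_pos p).le
  rw [tauLor]; linarith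

set_option maxHeartbeats 1000000 in
/-- The key coercivity estimate `τ² - 1 ≥ |q-p|²/(p₀q₀)²`. -/
lemma tauLor_sq_sub_one (p q : E3) :
    ‖q - p‖ ^ 2 / (pZero p * pZero q) ^ 2 ≤ tauLor p q ^ 2 - 1 := by
  set a := ‖p‖ with ha; set b := ‖q‖ with hb; set P := pZero p; set Q := pZero q
  set d := ‖q - p‖ with hdd
  have hP : 1 ≤ P := one_le_pZero p
  have hQ : 1 ≤ Q := one_le_pZero q
  have hP2 : P^2 = 1 + a^2 := pZero_sq p
  have hQ2 : Q^2 = 1 + b^2 := pZero_sq q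
  have hip : (inner ℝ p q : ℝ) ≤ a * b := real_inner_le_norm p q
  have hPQ : 1 + a*b ≤ P*Q := mul_pZero_ge p q
  have hd2 : d^2 = b^2 - 2*(inner ℝ p q : ℝ) + a^2 := by
    rw [hdd, show (inner ℝ p q : ℝ) = (inner ℝ q p : ℝ) from real_inner_comm q p,
      norm_sub_sq_real]
    try ring
  have habd : (a - b)^2 ≤ d^2 := by
    have h1 : |a - b| ≤ ‖p - q‖ := abs_norm_sub_norm_le p q
    have h2 : ‖p - q‖ = d := norm_sub_rev p q
    nlinarith [abs_nonneg (a-b), sq_abs (a-b)]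
  have htau : tauLor p q = P*Q - (inner ℝ p q : ℝ) := rfl
  have key : 2*(tauLor p q - 1) = d^2 - (P - Q)^2 := by
    rw [htau, hd2]; nlinarith [hP2, hQ2]
  have key2 : (P - Q)^2 * (P + Q)^2 = (a - b)^2 * (a + b)^2 := by
    have h : (P - Q) * (P + Q) = (a - b) * (a + b) := by nlinarith [hP2, hQ2]
    nlinarith [h]
  have hPQpos : 0 < P * Q := by nlinarith
  have hab : 0 ≤ a * b := mul_nonneg (norm_nonneg p) (norm_nonneg q)
  have key3 : 4 ≤ (P + Q)^2 - (a + b)^2 := by nlinarith [hP2, hQ2, hPQ]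
  have hsum : P + Q ≤ 2 * (P * Q) := by nlinarith
  have e1 : 2*(tauLor p q - 1)*(P+Q)^2 = d^2*(P+Q)^2 - (a-b)^2*(a+b)^2 := by
    linear_combination (P+Q)^2 * key - key2
  have h5 : (a-b)^2*(a+b)^2 ≤ d^2*(a+b)^2 :=
    mul_le_mul_of_nonneg_right habd (sq_nonneg (a+b))
  have h6 : d^2 * 4 ≤ d^2*((P+Q)^2 - (a+b)^2) :=
    mul_le_mul_of_nonneg_left key3 (sq_nonneg d)
  have key4 : 4 * d^2 ≤ 2*(tauLor p q - 1) * (P + Q)^2 := by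
    rw [e1]; nlinarith [h5, h6]
  have htau1 : 1 ≤ tauLor p q := one_le_tauLor p q
  have hsum2 : (P+Q)^2 ≤ 4*(P*Q)^2 := by nlinarith [hsum, hP, hQ]
  have key5 : d^2 ≤ 2*(tauLor p q - 1) * (P*Q)^2 := by
    have h7 : 2*(tauLor p q - 1) * (P + Q)^2 ≤ 2*(tauLor p q - 1) * (4*(P*Q)^2) :=
      mul_le_mul_of_nonneg_left hsum2 (by linarith)
    nlinarith [key4, h7]
  rw [div_le_iff₀ (by positivity)]
  nlinarith [key5, mul_nonneg (sq_nonneg (tauLor p q - 1)) (sq_nonneg (P*Q))]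

/-- helper: `(1+t)² exp(-t/2) ≤ 64 exp(-t/4)` for `t ≥ 0`. -/
lemma aux_exp_bound {t : ℝ} (ht : 0 ≤ t) : (1+t)^2 * Real.exp (-t/2) ≤ 64 * Real.exp (-t/4) := by
  have h1 : 1 + t ≤ 8 * Real.exp (t/8) := by
    have := Real.add_one_le_exp (t/8)
    nlinarith [Real.exp_pos (t/8)]
  have h2 : (1+t)^2 ≤ 64 * Real.exp (t/4) := by
    have hsq : (1+t)^2 ≤ (8 * Real.exp (t/8))^2 := by
      apply pow_le_pow_left₀ (by linarith) h1
    calc (1+t)^2 ≤ 64 * (Real.exp (t/8))^2 := by nlinarith [hsq]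
      _ = 64 * Real.exp (t/4) := by rw [sq, ← Real.exp_add]; ring_nf
  calc (1+t)^2 * Real.exp (-t/2) ≤ 64 * Real.exp (t/4) * Real.exp (-t/2) := by
        apply mul_le_mul_of_nonneg_right h2 (Real.exp_pos _).le
    _ = 64 * Real.exp (-t/4) := by rw [mul_assoc, ← Real.exp_add]; ring_nf

/-- The pointwise kernel bound. -/
lemma kernel_pointwise (p q : E3) :
    tauLor p q / (pZero p * pZero q) * (tauLor p q ^ 2 - 1) ^ (-(1 / 2) : ℝ)
      * Real.exp (-(pZero q) / 2)
    ≤ 128 * Real.exp (-‖q‖/4) * (‖q - p‖⁻¹ + 1) := by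
  set P := pZero p; set Q := pZero q
  have hP := pZero_pos p; have hQ := pZero_pos q
  by_cases hqp : q = p
  · subst hqp
    have hτ : tauLor q q = 1 := by
      have := pZero_sq q
      simp only [tauLor, real_inner_self_eq_norm_sq]
      nlinarith
    rw [hτ]
    norm_num
    positivity
  · set d := ‖q - p‖ with hd
    have hdpos : 0 < d := by
      rw [hd]; simpa [sub_eq_zero] using hqp
    have hτ1 : 1 ≤ tauLor p q := one_le_tauLor p q
    have hkey : d^2/(P*Q)^2 ≤ tauLor p q ^2 - 1 := tauLor_sq_sub_one p q
    have hpos2 : (0:ℝ) < d^2/(P*Q)^2 := by positivity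
    have hrpow : (tauLor p q ^ 2 - 1) ^ (-(1 / 2) : ℝ) ≤ P*Q/d := by
      have h1 : (tauLor p q ^ 2 - 1) ^ (-(1/2) : ℝ) ≤ (d^2/(P*Q)^2) ^ (-(1/2) : ℝ) :=
        Real.rpow_le_rpow_of_nonpos hpos2 hkey (by norm_num)
      have h2 : (d^2/(P*Q)^2) ^ (-(1/2) : ℝ) = P*Q/d := by
        rw [show d^2/(P*Q)^2 = (d/(P*Q))^2 by ring]
        rw [← Real.rpow_natCast (d/(P*Q)) 2, ← Real.rpow_mul (by positivity)]
        rw [show ((2:ℕ):ℝ) * (-(1/2)) = -1 by norm_num, Real.rpow_neg_one]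
        rw [inv_div]
      linarith
    have hfrac : tauLor p q / (P*Q) ≤ 2 := by
      rw [div_le_iff₀ (by positivity)]
      have := tauLor_le p q; linarith
    have hfrac0 : 0 ≤ tauLor p q / (P*Q) := by positivity
    have hrpow0 : 0 ≤ (tauLor p q ^ 2 - 1) ^ (-(1 / 2) : ℝ) :=
      Real.rpow_nonneg (by nlinarith) _
    have step1 : tauLor p q / (P*Q) * (tauLor p q ^ 2 - 1) ^ (-(1 / 2) : ℝ)
        * Real.exp (-Q/2) ≤ 2 * (P*Q/d) * Real.exp (-Q/2) := by
      have : tauLor p q / (P*Q) * (tauLor p q ^ 2 - 1) ^ (-(1 / 2) : ℝ) ≤ 2 * (P*Q/d) :=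
        mul_le_mul hfrac hrpow hrpow0 (by norm_num)
      exact mul_le_mul_of_nonneg_right this (Real.exp_pos _).le
    have hb := norm_nonneg q
    set b := ‖q‖ with hbq
    have hPle : P ≤ (1+b)*(1+d) := by
      have h1 : P ≤ 1 + ‖p‖ := pZero_le p
      have h2 : ‖p‖ ≤ b + d := by
        calc ‖p‖ ≤ ‖q‖ + ‖p - q‖ := by
              have := norm_sub_norm_le p q; linarith [norm_sub_norm_le p q,
                abs_norm_sub_norm_le p q, le_abs_self (‖p‖ - ‖q‖)]
          _ = b + d := by rw [norm_sub_rev]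
      nlinarith [hdpos]
    have hQle : Q ≤ 1 + b := pZero_le q
    have hexp : Real.exp (-Q/2) ≤ Real.exp (-b/2) := by
      apply Real.exp_le_exp.2
      have := norm_le_pZero q; linarith
    have hmain : 2 * (P*Q) * Real.exp (-Q/2) ≤ 128 * Real.exp (-b/4) * (1+d) := by
      have hPQ : P * Q ≤ (1+b)*(1+d)*(1+b) :=
        mul_le_mul hPle hQle hQ.le (by nlinarith [hdpos])
      have h3 : 2*(P*Q)*Real.exp (-Q/2) ≤ 2*((1+b)^2*(1+d))*Real.exp (-b/2) := by
        have e1 : 2*(P*Q)*Real.exp (-Q/2) ≤ 2*(P*Q)*Real.exp (-b/2) := by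
          apply mul_le_mul_of_nonneg_left hexp (by positivity)
        have e2 : 2*(P*Q)*Real.exp (-b/2) ≤ 2*((1+b)^2*(1+d))*Real.exp (-b/2) := by
          apply mul_le_mul_of_nonneg_right _ (Real.exp_pos _).le
          nlinarith [hPQ]
        linarith
      have h4 := aux_exp_bound hb
      calc 2*(P*Q)*Real.exp (-Q/2) ≤ 2*((1+b)^2*(1+d))*Real.exp (-b/2) := h3
        _ = 2*(1+d) * ((1+b)^2 * Real.exp (-b/2)) := by ring
        _ ≤ 2*(1+d) * (64*Real.exp (-b/4)) := by
            apply mul_le_mul_of_nonneg_left h4 (by nlinarith [hdpos])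
        _ = 128 * Real.exp (-b/4) * (1+d) := by ring
    have step2 : 2 * (P*Q/d) * Real.exp (-Q/2) ≤ 128 * Real.exp (-b/4) * (d⁻¹+1) := by
      have e : 2 * (P*Q/d) * Real.exp (-Q/2) = (2 * (P*Q) * Real.exp (-Q/2))/d := by ring
      have e2 : 128 * Real.exp (-b/4) * (d⁻¹+1) = (128 * Real.exp (-b/4) * (1+d))/d := by
        field_simp
      rw [e, e2]
      gcongr
    calc tauLor p q / (P*Q) * (tauLor p q ^ 2 - 1) ^ (-(1 / 2) : ℝ) * Real.exp (-Q/2)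
        ≤ 2 * (P*Q/d) * Real.exp (-Q/2) := step1
      _ ≤ 128 * Real.exp (-b/4) * (d⁻¹+1) := step2

lemma kernel_nonneg (p q : E3) :
    0 ≤ tauLor p q / (pZero p * pZero q) * (tauLor p q ^ 2 - 1) ^ (-(1 / 2) : ℝ)
      * Real.exp (-(pZero q) / 2) := by
  apply mul_nonneg (mul_nonneg _ _) (Real.exp_pos _).le
  · exact div_nonneg (le_trans zero_le_one (one_le_tauLor p q))
      (mul_nonneg (pZero_pos p).le (pZero_pos q).le)
  · exact Real.rpow_nonneg (by nlinarith [one_le_tauLor p q]) _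

lemma continuous_pZero : Continuous pZero :=
  Real.continuous_sqrt.comp (continuous_const.add (continuous_norm.pow 2))

lemma continuous_tauLor (p : E3) : Continuous (tauLor p) :=
  (continuous_const.mul continuous_pZero).sub (continuous_const.inner continuous_id)

lemma kernel_meas (p : E3) :
    Measurable (fun q : E3 => ENNReal.ofReal
    (tauLor p q / (pZero p * pZero q) * (tauLor p q ^ 2 - 1) ^ (-(1 / 2) : ℝ)
      * Real.exp (-(pZero q) / 2))) := by
  apply Measurable.ennreal_ofReal
  apply Measurable.mul
  apply Measurable.mul
  · exact ((continuous_tauLor p).measurable).div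
      (continuous_const.mul continuous_pZero).measurable
  · have h1 : Measurable (fun q : E3 => tauLor p q ^ 2 - 1) :=
      (((continuous_tauLor p).pow 2).sub continuous_const).measurable
    fun_prop
  · exact (Real.continuous_exp.comp ((continuous_pZero.neg).div_const 2)).measurable

lemma finite_exp_tail : ∫⁻ x : E3, ENNReal.ofReal (Real.exp (-‖x‖/4)) < ⊤ := by
  have hb : ∀ x : E3, ENNReal.ofReal (Real.exp (-‖x‖/4))
      ≤ ENNReal.ofReal 65536 * ENNReal.ofReal ((1 + ‖x‖) ^ (-(4:ℝ))) := by
    intro x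
    rw [← ENNReal.ofReal_mul (by norm_num)]
    apply ENNReal.ofReal_le_ofReal
    set t := ‖x‖ with ht
    have htn : 0 ≤ t := norm_nonneg x
    have h1 : 1 + t ≤ 16 * Real.exp (t/16) := by
      have := Real.add_one_le_exp (t/16)
      nlinarith [Real.exp_pos (t/16)]
    have h2 : (1+t)^4 ≤ 65536 * Real.exp (t/4) := by
      have hsq : (1+t)^4 ≤ (16 * Real.exp (t/16))^4 :=
        pow_le_pow_left₀ (by linarith) h1 4
      have he : (Real.exp (t/16))^4 = Real.exp (t/4) := by
        rw [← Real.exp_nat_mul]; ring_nf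
      nlinarith [hsq, he]
    have hpow : ((1:ℝ) + t) ^ (-(4:ℝ)) = ((1+t)^4)⁻¹ := by
      rw [Real.rpow_neg (by linarith), show ((4:ℝ)) = ((4:ℕ):ℝ) by norm_num,
        Real.rpow_natCast]
    have hmain : Real.exp (-t/4) * (1+t)^4 ≤ 65536 := by
      have emul : Real.exp (-t/4) * Real.exp (t/4) = 1 := by
        rw [← Real.exp_add]; ring_nf; exact Real.exp_zero
      nlinarith [h2, (Real.exp_pos (-t/4)).le, emul]
    rw [hpow, ← div_eq_mul_inv, le_div_iff₀ (by positivity)]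
    exact hmain
  calc ∫⁻ x : E3, ENNReal.ofReal (Real.exp (-‖x‖/4))
      ≤ ∫⁻ x : E3, ENNReal.ofReal 65536 * ENNReal.ofReal ((1 + ‖x‖) ^ (-(4:ℝ))) :=
        lintegral_mono hb
    _ = ENNReal.ofReal 65536 * ∫⁻ x : E3, ENNReal.ofReal ((1 + ‖x‖) ^ (-(4:ℝ))) :=
        lintegral_const_mul' _ _ ENNReal.ofReal_ne_top
    _ < ⊤ := by
        apply ENNReal.mul_lt_top ENNReal.ofReal_lt_top
        apply finite_integral_one_add_norm
        rw [finrank_euclideanSpace_fin]; norm_num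

lemma finite_singular {s : ℝ} (hs0 : 0 < s) (hs3 : s < 3) :
    ∫⁻ x : E3 in closedBall 0 1, ENNReal.ofReal (‖x‖ ^ (-s)) < ⊤ := by
  set μ : Measure E3 := volume.restrict (closedBall 0 1) with hμ
  have hmeas : AEMeasurable (fun x : E3 => ‖x‖ ^ (-s)) μ := by fun_prop
  have hpos : 0 ≤ᶠ[ae μ] fun x : E3 => ‖x‖ ^ (-s) :=
    Filter.Eventually.of_forall fun x => Real.rpow_nonneg (norm_nonneg x) _
  rw [show (∫⁻ x : E3 in closedBall 0 1, ENNReal.ofReal (‖x‖ ^ (-s)))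
      = ∫⁻ x, ENNReal.ofReal (‖x‖ ^ (-s)) ∂μ from rfl,
    lintegral_eq_lintegral_meas_le μ hpos hmeas]
  have hsub : ∀ t : ℝ, 0 < t →
      {a : E3 | t ≤ ‖a‖ ^ (-s)} ⊆ closedBall 0 (t ^ (-s⁻¹)) := by
    intro t ht a ha
    simp only [mem_setOf_eq] at ha
    rcases eq_or_ne a 0 with rfl | ha0
    · simp only [mem_closedBall, dist_self]
      positivity
    · have hna : 0 < ‖a‖ := norm_pos_iff.2 ha0
      rw [mem_closedBall_zero_iff]
      have h1 : (‖a‖ ^ (-s)) ^ (-s)⁻¹ ≤ t ^ (-s)⁻¹ := by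
        apply Real.rpow_le_rpow_of_nonpos ht ha
        rw [inv_nonpos]; linarith
      rwa [Real.rpow_rpow_inv (norm_nonneg a) (neg_ne_zero.2 hs0.ne'),
        show (-s)⁻¹ = -s⁻¹ from inv_neg] at h1
  have hres : ∀ t : ℝ, t ∈ Ioi (0:ℝ) → μ {a : E3 | t ≤ ‖a‖ ^ (-s)}
      ≤ min (volume (closedBall (0:E3) 1)) (volume (closedBall (0:E3) (t ^ (-s⁻¹)))) := by
    intro t ht
    refine le_min ?_ ?_
    · calc μ {a : E3 | t ≤ ‖a‖ ^ (-s)} ≤ μ univ := measure_mono (subset_univ _)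
        _ = volume (closedBall (0:E3) 1) := Measure.restrict_apply_univ _
    · exact (Measure.restrict_apply_le _ _).trans (measure_mono (hsub t ht))
  set f : ℝ → ℝ≥0∞ := fun t => μ {a : E3 | t ≤ ‖a‖ ^ (-s)} with hf
  set V := volume (closedBall (0:E3) 1) with hV
  set vB := volume (ball (0:E3) 1) with hvB
  calc ∫⁻ t in Ioi (0:ℝ), f t ≤ ∫⁻ t in Ioc (0:ℝ) 1 ∪ Ioi 1, f t :=
        lintegral_mono_set Ioi_subset_Ioc_union_Ioi
    _ ≤ (∫⁻ t in Ioc (0:ℝ) 1, f t) + ∫⁻ t in Ioi (1:ℝ), f t := lintegral_union_le _ _ _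
    _ < ⊤ := by
        apply ENNReal.add_lt_top.2
        constructor
        · calc (∫⁻ t in Ioc (0:ℝ) 1, f t) ≤ ∫⁻ _ in Ioc (0:ℝ) 1, V :=
              setLIntegral_mono' measurableSet_Ioc
                (fun t ht => (hres t ht.1).trans (min_le_left _ _))
            _ = V * volume (Ioc (0:ℝ) 1) := setLIntegral_const _ _
            _ < ⊤ := by
                apply ENNReal.mul_lt_top measure_closedBall_lt_top
                rw [Real.volume_Ioc]
                exact ENNReal.ofReal_lt_top
        · have hb1 : ∀ t ∈ Ioi (1:ℝ), f t ≤ ENNReal.ofReal (t ^ (-(3/s))) * vB := by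
            intro t ht
            have ht0 : (0:ℝ) < t := lt_trans one_pos ht
            have h2 := (hres t ht0).trans (min_le_right _ _)
            have h3 : volume (closedBall (0:E3) (t ^ (-s⁻¹)))
                = ENNReal.ofReal ((t ^ (-s⁻¹)) ^ Module.finrank ℝ E3) * vB :=
              Measure.addHaar_closedBall _ _ (Real.rpow_nonneg ht0.le _)
            rw [h3, finrank_euclideanSpace_fin] at h2
            refine h2.trans (le_of_eq ?_)
            congr 1
            rw [← Real.rpow_natCast (t ^ (-s⁻¹)) 3, ← Real.rpow_mul ht0.le]
            norm_num
            rw [div_eq_inv_mul]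
          calc (∫⁻ t in Ioi (1:ℝ), f t)
              ≤ ∫⁻ t in Ioi (1:ℝ), ENNReal.ofReal (t ^ (-(3/s))) * vB :=
                setLIntegral_mono' measurableSet_Ioi hb1
            _ = (∫⁻ t in Ioi (1:ℝ), ENNReal.ofReal (t ^ (-(3/s)))) * vB :=
                lintegral_mul_const' _ _ measure_ball_lt_top.ne
            _ < ⊤ := by
                apply ENNReal.mul_lt_top _ measure_ball_lt_top
                apply IntegrableOn.setLIntegral_lt_top
                apply integrableOn_Ioi_rpow_of_lt _ one_pos
                rw [neg_lt_neg_iff, lt_div_iff₀ hs0]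
                linarith

/-- Uniform bound on the `Lˢ` norm of the majorant kernel. -/
lemma majorant_bound {s : ℝ} (hs1 : 1 ≤ s) (hs3 : s < 3) :
    ∃ M : ℝ≥0∞, M ≠ ⊤ ∧ ∀ p : E3,
      ∫⁻ q : E3, (ENNReal.ofReal (128 * Real.exp (-‖q‖/4) * (‖q - p‖⁻¹ + 1))) ^ s ≤ M := by
  have hs0 : (0:ℝ) < s := lt_of_lt_of_le one_pos hs1
  set c : ℝ := (256:ℝ) ^ s with hc
  have hc0 : 0 ≤ c := Real.rpow_nonneg (by norm_num) _
  refine ⟨ENNReal.ofReal c * (∫⁻ x : E3, ENNReal.ofReal (Real.exp (-‖x‖/4)))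
      + ENNReal.ofReal c * (∫⁻ x : E3 in closedBall 0 1, ENNReal.ofReal (‖x‖ ^ (-s))), ?_, ?_⟩
  · exact ENNReal.add_ne_top.2
      ⟨(ENNReal.mul_lt_top ENNReal.ofReal_lt_top finite_exp_tail).ne,
       (ENNReal.mul_lt_top ENNReal.ofReal_lt_top (finite_singular hs0 hs3)).ne⟩
  intro p
  set G1 : E3 → ℝ≥0∞ := fun q => ENNReal.ofReal (c * Real.exp (-‖q‖/4)) with hG1
  set F : E3 → ℝ≥0∞ :=
    fun x => (closedBall (0:E3) 1).indicator (fun x => ENNReal.ofReal (c * ‖x‖ ^ (-s))) x with hF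
  have hptwise : ∀ q : E3,
      (ENNReal.ofReal (128 * Real.exp (-‖q‖/4) * (‖q - p‖⁻¹ + 1))) ^ s
        ≤ G1 q + F (q - p) := by
    intro q
    set e := Real.exp (-‖q‖/4) with he
    have he0 : 0 < e := Real.exp_pos _
    have he1 : e ≤ 1 := by
      rw [he, Real.exp_le_one_iff]
      have := norm_nonneg q; linarith
    set d := ‖q - p‖ with hd
    have hd0 : 0 ≤ d := norm_nonneg _
    have hbase0 : 0 ≤ 128 * e * (d⁻¹ + 1) := by positivity
    rw [ENNReal.ofReal_rpow_of_nonneg hbase0 hs0.le]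
    by_cases hinv : d⁻¹ ≤ 1
    · have hb : 128 * e * (d⁻¹ + 1) ≤ 256 * e := by nlinarith
      have h2 : (128 * e * (d⁻¹ + 1)) ^ s ≤ (256 * e) ^ s :=
        Real.rpow_le_rpow hbase0 hb hs0.le
      have h3 : (256 * e) ^ s = 256 ^ s * e ^ s := Real.mul_rpow (by norm_num) he0.le
      have h4 : e ^ s ≤ e := by
        calc e ^ s ≤ e ^ (1:ℝ) := Real.rpow_le_rpow_of_exponent_ge he0 he1 hs1
          _ = e := Real.rpow_one e
      have h5 : (128 * e * (d⁻¹ + 1)) ^ s ≤ c * e := by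
        calc (128 * e * (d⁻¹ + 1)) ^ s ≤ 256 ^ s * e ^ s := by rw [← h3]; exact h2
          _ ≤ c * e := mul_le_mul_of_nonneg_left h4 (Real.rpow_nonneg (by norm_num) _)
      exact le_add_right ((ENNReal.ofReal_le_ofReal h5).trans_eq rfl)
    · push_neg at hinv
      have hdpos : 0 < d ∧ d < 1 := one_lt_inv_iff₀.1 hinv
      have hmem : q - p ∈ closedBall (0:E3) 1 := by
        rw [mem_closedBall_zero_iff]; exact hdpos.2.le
      have hb : 128 * e * (d⁻¹ + 1) ≤ 256 * d⁻¹ := by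
        have : (1:ℝ) ≤ d⁻¹ := hinv.le
        nlinarith [he0.le, he1, inv_nonneg.2 hd0]
      have h2 : (128 * e * (d⁻¹ + 1)) ^ s ≤ (256 * d⁻¹) ^ s :=
        Real.rpow_le_rpow hbase0 hb hs0.le
      have h3 : (256 * d⁻¹) ^ s = c * d ^ (-s) := by
        rw [Real.mul_rpow (by norm_num) (inv_nonneg.2 hd0), Real.inv_rpow hd0,
          ← Real.rpow_neg hd0]
      have h5 : (128 * e * (d⁻¹ + 1)) ^ s ≤ c * d ^ (-s) := by rw [← h3]; exact h2
      refine le_add_left ?_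
      show _ ≤ (closedBall (0:E3) 1).indicator (fun x => ENNReal.ofReal (c * ‖x‖ ^ (-s))) (q - p)
      rw [Set.indicator_of_mem hmem]
      exact ENNReal.ofReal_le_ofReal h5
  have hG1meas : Measurable G1 := by
    apply Measurable.ennreal_ofReal
    fun_prop
  have hFinner : Measurable (fun x : E3 => ENNReal.ofReal (c * ‖x‖ ^ (-s))) := by
    apply Measurable.ennreal_ofReal
    fun_prop
  have hFmeas : Measurable F := hFinner.indicator measurableSet_closedBall
  calc ∫⁻ q : E3, (ENNReal.ofReal (128 * Real.exp (-‖q‖/4) * (‖q - p‖⁻¹ + 1))) ^ s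
      ≤ ∫⁻ q : E3, (G1 q + F (q - p)) := lintegral_mono hptwise
    _ = (∫⁻ q : E3, G1 q) + ∫⁻ q : E3, F (q - p) :=
        lintegral_add_left hG1meas _
    _ = ENNReal.ofReal c * (∫⁻ x : E3, ENNReal.ofReal (Real.exp (-‖x‖/4)))
        + ENNReal.ofReal c * (∫⁻ x : E3 in closedBall 0 1, ENNReal.ofReal (‖x‖ ^ (-s))) := by
        congr 1
        · rw [← lintegral_const_mul' _ _ ENNReal.ofReal_ne_top]
          apply lintegral_congr
          intro x
          rw [hG1, ← ENNReal.ofReal_mul hc0]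
        · rw [(measurePreserving_sub_right volume p).lintegral_comp hFmeas]
          rw [hF, lintegral_indicator measurableSet_closedBall,
            ← lintegral_const_mul' _ _ ENNReal.ofReal_ne_top]
          apply lintegral_congr
          intro x
          rw [← ENNReal.ofReal_mul hc0]

end Auxiliary

/-- For `r ∈ (3/2, ∞]` there is `C = C(r) > 0` such that for every `g ∈ L^r(ℝ³)` and every `p`,
`∫ (τ/(p₀q₀)) (τ² - 1)^{-1/2} e^{-q₀/2} |g(q)| dq ≤ C ‖g‖_{L^r}`. -/
theorem lambda_kernel_Lr_bound (r : ℝ≥0∞) (hr : 3 / 2 < r) :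
    ∃ C : ℝ, 0 < C ∧ ∀ g : EuclideanSpace ℝ (Fin 3) → ℝ, MemLp g r volume →
      ∀ p : EuclideanSpace ℝ (Fin 3),
        (∫⁻ q, ENNReal.ofReal
            ((tauLor p q / (pZero p * pZero q)) * ((tauLor p q) ^ 2 - 1) ^ (-(1 / 2) : ℝ)
              * Real.exp (-(pZero q) / 2) * |g q|))
          ≤ ENNReal.ofReal C * eLpNorm g r volume := by
  by_cases hrtop : r = ⊤
  · -- the case `r = ∞`
    obtain ⟨M, hMne, hM⟩ := majorant_bound le_rfl (by norm_num : (1:ℝ) < 3)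
    refine ⟨M.toReal + 1, by positivity, ?_⟩
    intro g hg p
    have hgtop : eLpNormEssSup g volume ≠ ⊤ := by
      have h := hg.2; rw [hrtop, eLpNorm_exponent_top] at h; exact h.ne
    calc ∫⁻ q, ENNReal.ofReal
            ((tauLor p q / (pZero p * pZero q)) * ((tauLor p q) ^ 2 - 1) ^ (-(1 / 2) : ℝ)
              * Real.exp (-(pZero q) / 2) * |g q|)
        = ∫⁻ q, ENNReal.ofReal
            ((tauLor p q / (pZero p * pZero q)) * ((tauLor p q) ^ 2 - 1) ^ (-(1 / 2) : ℝ)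
              * Real.exp (-(pZero q) / 2)) * ENNReal.ofReal |g q| := by
          apply lintegral_congr
          intro q
          rw [ENNReal.ofReal_mul (kernel_nonneg p q)]
      _ ≤ ∫⁻ q, ENNReal.ofReal
            ((tauLor p q / (pZero p * pZero q)) * ((tauLor p q) ^ 2 - 1) ^ (-(1 / 2) : ℝ)
              * Real.exp (-(pZero q) / 2)) * eLpNormEssSup g volume := by
          apply lintegral_mono_ae
          filter_upwards [ae_le_eLpNormEssSup (f := g) (μ := volume)] with q hq
          apply mul_le_mul_right
          rw [show ENNReal.ofReal |g q| = ‖g q‖ₑ by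
            rw [← Real.norm_eq_abs, ofReal_norm]]
          exact hq
      _ = (∫⁻ q, ENNReal.ofReal
            ((tauLor p q / (pZero p * pZero q)) * ((tauLor p q) ^ 2 - 1) ^ (-(1 / 2) : ℝ)
              * Real.exp (-(pZero q) / 2))) * eLpNormEssSup g volume :=
          lintegral_mul_const' _ _ hgtop
      _ ≤ M * eLpNormEssSup g volume := by
          apply mul_le_mul_left
          calc (∫⁻ q, ENNReal.ofReal
              ((tauLor p q / (pZero p * pZero q)) * ((tauLor p q) ^ 2 - 1) ^ (-(1 / 2) : ℝ)
                * Real.exp (-(pZero q) / 2)))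
              ≤ ∫⁻ q, (ENNReal.ofReal (128 * Real.exp (-‖q‖/4) * (‖q - p‖⁻¹ + 1))) ^ (1:ℝ) := by
                apply lintegral_mono
                intro q
                simp only [ENNReal.rpow_one]
                exact ENNReal.ofReal_le_ofReal (kernel_pointwise p q)
            _ ≤ M := hM p
      _ ≤ ENNReal.ofReal (M.toReal + 1) * eLpNorm g r volume := by
          rw [hrtop, eLpNorm_exponent_top]
          apply mul_le_mul_left
          calc M = ENNReal.ofReal M.toReal := (ENNReal.ofReal_toReal hMne).symm
            _ ≤ ENNReal.ofReal (M.toReal + 1) := ENNReal.ofReal_le_ofReal (by linarith)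
  · -- the case `3/2 < r < ∞`
    have hr0 : r ≠ 0 := by
      intro h; rw [h] at hr; simp at hr
    set t := r.toReal with htdef
    have ht32 : 3/2 < t := by
      have h32 : (3/2 : ℝ≥0∞) ≠ ⊤ := (ENNReal.div_lt_top (by norm_num) (by norm_num)).ne
      have h := (ENNReal.toReal_lt_toReal h32 hrtop).2 hr
      rwa [ENNReal.toReal_div, show ((3:ℝ≥0∞).toReal) = 3 by norm_num,
        show ((2:ℝ≥0∞).toReal) = 2 by norm_num] at h
    have ht1 : 1 < t := by linarith
    set sC := t / (t - 1) with hsC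
    have hconj : sC.HolderConjugate t := by
      rw [Real.holderConjugate_iff]
      constructor
      · rw [hsC, lt_div_iff₀ (by linarith)]; linarith
      · rw [hsC]; field_simp; ring
    have hs1 : (1:ℝ) ≤ sC := hconj.lt.le
    have hs0 : (0:ℝ) < sC := lt_of_lt_of_le one_pos hs1
    have hs3 : sC < 3 := by rw [hsC, div_lt_iff₀ (by linarith)]; linarith
    obtain ⟨M, hMne, hM⟩ := majorant_bound hs1 hs3
    have hMfin : M ^ (1/sC) ≠ ⊤ := ENNReal.rpow_ne_top_of_nonneg (by positivity) hMne
    refine ⟨(M ^ (1/sC)).toReal + 1, by positivity, ?_⟩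
    intro g hg p
    set f : EuclideanSpace ℝ (Fin 3) → ℝ≥0∞ := fun q => ENNReal.ofReal
        ((tauLor p q / (pZero p * pZero q)) * ((tauLor p q) ^ 2 - 1) ^ (-(1 / 2) : ℝ)
          * Real.exp (-(pZero q) / 2)) with hfdef
    set fg : EuclideanSpace ℝ (Fin 3) → ℝ≥0∞ := fun q => (‖g q‖₊ : ℝ≥0∞) with hfgdef
    have hfmeas : AEMeasurable f volume := (kernel_meas p).aemeasurable
    have hfgmeas : AEMeasurable fg volume := hg.aestronglyMeasurable.enorm
    calc ∫⁻ q, ENNReal.ofReal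
            ((tauLor p q / (pZero p * pZero q)) * ((tauLor p q) ^ 2 - 1) ^ (-(1 / 2) : ℝ)
              * Real.exp (-(pZero q) / 2) * |g q|)
        = ∫⁻ q, (f * fg) q := by
          apply lintegral_congr
          intro q
          rw [Pi.mul_apply, hfdef, hfgdef]
          rw [ENNReal.ofReal_mul (kernel_nonneg p q)]
          congr 1
          rw [← Real.norm_eq_abs]; exact ofReal_norm _
      _ ≤ (∫⁻ q, f q ^ sC) ^ (1/sC) * (∫⁻ q, fg q ^ t) ^ (1/t) :=
          ENNReal.lintegral_mul_le_Lp_mul_Lq volume hconj hfmeas hfgmeas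
      _ ≤ M ^ (1/sC) * eLpNorm g r volume := by
          apply mul_le_mul'
          · apply ENNReal.rpow_le_rpow _ (by positivity)
            calc (∫⁻ q, f q ^ sC)
                ≤ ∫⁻ q, (ENNReal.ofReal (128 * Real.exp (-‖q‖/4) * (‖q - p‖⁻¹ + 1))) ^ sC :=
                  lintegral_mono fun q => ENNReal.rpow_le_rpow
                    (ENNReal.ofReal_le_ofReal (kernel_pointwise p q)) hs0.le
              _ ≤ M := hM p
          · exact (eLpNorm_eq_lintegral_rpow_enorm_toReal hr0 hrtop).ge
      _ ≤ ENNReal.ofReal ((M ^ (1/sC)).toReal + 1) * eLpNorm g r volume := by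
          apply mul_le_mul_left
          calc M ^ (1/sC) = ENNReal.ofReal ((M ^ (1/sC)).toReal) :=
              (ENNReal.ofReal_toReal hMfin).symm
            _ ≤ ENNReal.ofReal ((M ^ (1/sC)).toReal + 1) :=
              ENNReal.ofReal_le_ofReal (by linarith)
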